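/- Let H be a complex Hilbert space. For each n ∈ ℕ let S⁽ⁿ⁾ and S be degenerate semigroups on H consisting of self-adjoint contractions. Suppose that for all T > 0, all f ∈ H and all g ∈ L¹([0,T]; H), lim_{n→∞} ∫₀^T ⟨(S⁽ⁿ⁾_t − S_t) f, g(t)⟩ dt = 0. Then for all T > 0 and f ∈ H, lim_{n→∞} ∫₀^T ‖(S⁽ⁿ⁾_t − S_t) f‖² dt = 0, and consequently lim_{n→∞} ∫₀^T ‖(S⁽ⁿ⁾_t − S_t) f‖ dt = 0. (The proof rests on the identity ∫₀^T ‖(S⁽ⁿ⁾_t − S_t) f‖² dt = ½ ∫₀^{2T} ⟨(S⁽ⁿ⁾_t − S_t) f, f⟩ dt − 2 Re ∫₀^T ⟨(S⁽ⁿ⁾_t − S_t) f, S_t f⟩ dt, valid by self-adjointness and the semigroup property.) -/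

import Mathlib

open MeasureTheory Filter Topology

lemma aux_integrable {E : Type*} [NormedAddCommGroup E] (u : ℝ → E) (T : ℝ)
    (hc : ContinuousOn u (Set.Ioi (0:ℝ))) (C : ℝ)
    (hb : ∀ t ∈ Set.Ioc (0:ℝ) T, ‖u t‖ ≤ C) :
    IntegrableOn u (Set.Ioc (0:ℝ) T) := by
  have hmeas : AEStronglyMeasurable u (volume.restrict (Set.Ioc (0:ℝ) T)) :=
    (hc.mono Set.Ioc_subset_Ioi_self).aestronglyMeasurable measurableSet_Ioc
  refine Integrable.mono' (g := fun _ => C) (integrableOn_const measure_Ioc_lt_top.ne)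
    hmeas ?_
  exact (ae_restrict_iff' measurableSet_Ioc).2 (Filter.Eventually.of_forall hb)

lemma aux_key {H : Type*} [NormedAddCommGroup H] [InnerProductSpace ℂ H] [CompleteSpace H]
    (A B : H →L[ℂ] H) (hA : IsSelfAdjoint A) (hB : IsSelfAdjoint B) (f : H) :
    ‖A f - B f‖ ^ 2 =
      (inner ℂ (A (A f) - B (B f)) f : ℂ).re - 2 * (inner ℂ (A f - B f) (B f) : ℂ).re := by
  have hA' : (inner ℂ (A (A f)) f : ℂ) = inner ℂ (A f) (A f) := by
    exact hA.isSymmetric (A f) f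
  have hB' : (inner ℂ (B (B f)) f : ℂ) = inner ℂ (B f) (B f) := by
    exact hB.isSymmetric (B f) f
  rw [@norm_sub_sq ℂ]
  simp only [inner_sub_left, hA', hB', Complex.sub_re]
  rw [← @inner_self_eq_norm_sq ℂ _ _ _ _ (A f), ← @inner_self_eq_norm_sq ℂ _ _ _ _ (B f)]
  simp [Complex.sub_re]; ring

theorem L1_weak_convergence_to_L2_and_L1_norm_convergence
    {H : Type*} [NormedAddCommGroup H] [InnerProductSpace ℂ H] [CompleteSpace H]
    (S : ℕ → ℝ → H →L[ℂ] H) (S' : ℝ → H →L[ℂ] H)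
    (hScont : ∀ n, ∀ x : H, ContinuousOn (fun t => S n t x) (Set.Ioi (0 : ℝ)))
    (hS'cont : ∀ x : H, ContinuousOn (fun t => S' t x) (Set.Ioi (0 : ℝ)))
    (hSsg : ∀ n, ∀ s t : ℝ, 0 < s → 0 < t → S n (s + t) = (S n s).comp (S n t))
    (hS'sg : ∀ s t : ℝ, 0 < s → 0 < t → S' (s + t) = (S' s).comp (S' t))
    (hSsa : ∀ n, ∀ t : ℝ, 0 < t → IsSelfAdjoint (S n t))
    (hS'sa : ∀ t : ℝ, 0 < t → IsSelfAdjoint (S' t))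
    (hScontr : ∀ n, ∀ t : ℝ, 0 < t → ‖S n t‖ ≤ 1)
    (hS'contr : ∀ t : ℝ, 0 < t → ‖S' t‖ ≤ 1)
    (h3 : ∀ T : ℝ, 0 < T → ∀ f : H, ∀ g : ℝ → H, IntegrableOn g (Set.Ioc (0 : ℝ) T) →
      Tendsto (fun n => ∫ t in Set.Ioc (0 : ℝ) T, (inner ℂ (S n t f - S' t f) (g t) : ℂ))
        atTop (nhds 0)) :
    ∀ T : ℝ, 0 < T → ∀ f : H,
      Tendsto (fun n => ∫ t in Set.Ioc (0 : ℝ) T, ‖S n t f - S' t f‖ ^ 2)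
        atTop (nhds 0) ∧
      Tendsto (fun n => ∫ t in Set.Ioc (0 : ℝ) T, ‖S n t f - S' t f‖)
        atTop (nhds 0) := by
  intro T hT f
  -- basic bounds and continuity
  have hS'b : ∀ t : ℝ, 0 < t → ‖S' t f‖ ≤ ‖f‖ := fun t ht => by
    calc ‖S' t f‖ ≤ ‖S' t‖ * ‖f‖ := (S' t).le_opNorm f
    _ ≤ 1 * ‖f‖ := mul_le_mul_of_nonneg_right (hS'contr t ht) (norm_nonneg f)
    _ = ‖f‖ := one_mul _
  have hDb : ∀ n, ∀ t : ℝ, 0 < t → ‖S n t f - S' t f‖ ≤ 2 * ‖f‖ := fun n t ht => by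
    have h1 : ‖S n t f‖ ≤ ‖f‖ := by
      calc ‖S n t f‖ ≤ ‖S n t‖ * ‖f‖ := (S n t).le_opNorm f
      _ ≤ 1 * ‖f‖ := mul_le_mul_of_nonneg_right (hScontr n t ht) (norm_nonneg f)
      _ = ‖f‖ := one_mul _
    calc ‖S n t f - S' t f‖ ≤ ‖S n t f‖ + ‖S' t f‖ := norm_sub_le _ _
    _ ≤ 2 * ‖f‖ := by have := hS'b t ht; linarith
  have hDcont : ∀ n, ContinuousOn (fun t => S n t f - S' t f) (Set.Ioi (0:ℝ)) :=
    fun n => (hScont n f).sub (hS'cont f)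
  -- integrabilities
  have hInt2 : ∀ n, IntegrableOn (fun t => ‖S n t f - S' t f‖ ^ 2) (Set.Ioc (0:ℝ) T) := by
    intro n
    refine aux_integrable _ T (((hDcont n).norm).pow 2) ((2*‖f‖)^2) fun t ht => ?_
    rw [Real.norm_eq_abs, abs_of_nonneg (by positivity)]
    have := hDb n t ht.1
    have h0 : (0:ℝ) ≤ ‖S n t f - S' t f‖ := norm_nonneg _
    nlinarith
  have hIntB : ∀ n, IntegrableOn (fun t => (inner ℂ (S n t f - S' t f) (S' t f) : ℂ))
      (Set.Ioc (0:ℝ) T) := by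
    intro n
    refine aux_integrable _ T ((hDcont n).inner (hS'cont f)) (2*‖f‖*‖f‖) fun t ht => ?_
    calc ‖(inner ℂ (S n t f - S' t f) (S' t f) : ℂ)‖ ≤ ‖S n t f - S' t f‖ * ‖S' t f‖ :=
      norm_inner_le_norm _ _
    _ ≤ (2*‖f‖) * ‖f‖ :=
        mul_le_mul (hDb n t ht.1) (hS'b t ht.1) (norm_nonneg _) (by positivity)
  have hD2cont : ∀ n, ContinuousOn (fun t : ℝ => S n (2*t) f - S' (2*t) f) (Set.Ioi (0:ℝ)) := by
    intro n
    have hmap : Set.MapsTo (fun t : ℝ => 2*t) (Set.Ioi (0:ℝ)) (Set.Ioi (0:ℝ)) :=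
      fun t ht => by simp only [Set.mem_Ioi] at *; linarith
    exact ((hDcont n).comp ((continuous_mul_left 2).continuousOn) hmap)
  have hIntA2 : ∀ n, IntegrableOn (fun t => (inner ℂ (S n (2*t) f - S' (2*t) f) f : ℂ))
      (Set.Ioc (0:ℝ) T) := by
    intro n
    refine aux_integrable _ T ((hD2cont n).inner continuousOn_const) (2*‖f‖*‖f‖) fun t ht => ?_
    calc ‖(inner ℂ (S n (2*t) f - S' (2*t) f) f : ℂ)‖ ≤ ‖S n (2*t) f - S' (2*t) f‖ * ‖f‖ :=
      norm_inner_le_norm _ _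
    _ ≤ (2*‖f‖) * ‖f‖ :=
        mul_le_mul_of_nonneg_right (hDb n (2*t) (by linarith [ht.1])) (norm_nonneg f)
  -- weak convergence consequences
  have hA : Tendsto (fun n => ∫ t in Set.Ioc (0:ℝ) (2*T),
      (inner ℂ (S n t f - S' t f) f : ℂ)) atTop (nhds 0) :=
    h3 (2*T) (by linarith) f (fun _ => f)
      (integrableOn_const measure_Ioc_lt_top.ne)
  have hB : Tendsto (fun n => ∫ t in Set.Ioc (0:ℝ) T,
      (inner ℂ (S n t f - S' t f) (S' t f) : ℂ)) atTop (nhds 0) :=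
    h3 T hT f (fun t => S' t f)
      (aux_integrable _ T (hS'cont f) ‖f‖ fun t ht => hS'b t ht.1)
  -- the key integral identity
  have hiden : ∀ n, ∫ t in Set.Ioc (0:ℝ) T, ‖S n t f - S' t f‖ ^ 2 =
      2⁻¹ * (∫ t in Set.Ioc (0:ℝ) (2*T), (inner ℂ (S n t f - S' t f) f : ℂ)).re
        - 2 * (∫ t in Set.Ioc (0:ℝ) T, (inner ℂ (S n t f - S' t f) (S' t f) : ℂ)).re := by
    intro n
    have step1 : ∫ t in Set.Ioc (0:ℝ) T, ‖S n t f - S' t f‖ ^ 2 =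
        ∫ t in Set.Ioc (0:ℝ) T, ((inner ℂ (S n (2*t) f - S' (2*t) f) f : ℂ).re
          - 2 * (inner ℂ (S n t f - S' t f) (S' t f) : ℂ).re) := by
      refine setIntegral_congr_fun measurableSet_Ioc fun t ht => ?_
      have ht0 := ht.1
      have e1 : S n (2*t) f = S n t (S n t f) := by
        rw [two_mul, hSsg n t t ht0 ht0]; rfl
      have e2 : S' (2*t) f = S' t (S' t f) := by
        rw [two_mul, hS'sg t t ht0 ht0]; rfl
      rw [e1, e2]
      exact aux_key (S n t) (S' t) (hSsa n t ht0) (hS'sa t ht0) f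
    have hre1' : IntegrableOn (fun t => (inner ℂ (S n (2*t) f - S' (2*t) f) f : ℂ).re)
        (Set.Ioc (0:ℝ) T) := (hIntA2 n).re
    have hre2' : IntegrableOn (fun t => (inner ℂ (S n t f - S' t f) (S' t f) : ℂ).re)
        (Set.Ioc (0:ℝ) T) := (hIntB n).re
    have step2 : ∫ t in Set.Ioc (0:ℝ) T, ((inner ℂ (S n (2*t) f - S' (2*t) f) f : ℂ).re
          - 2 * (inner ℂ (S n t f - S' t f) (S' t f) : ℂ).re) =
        (∫ t in Set.Ioc (0:ℝ) T, (inner ℂ (S n (2*t) f - S' (2*t) f) f : ℂ).re)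
          - 2 * ∫ t in Set.Ioc (0:ℝ) T, (inner ℂ (S n t f - S' t f) (S' t f) : ℂ).re := by
      rw [integral_sub hre1' (hre2'.const_mul 2), integral_const_mul]
    have hre1 : ∫ t in Set.Ioc (0:ℝ) T, (inner ℂ (S n (2*t) f - S' (2*t) f) f : ℂ).re =
        (∫ t in Set.Ioc (0:ℝ) T, (inner ℂ (S n (2*t) f - S' (2*t) f) f : ℂ)).re :=
      integral_re (hIntA2 n)
    have hre2 : ∫ t in Set.Ioc (0:ℝ) T, (inner ℂ (S n t f - S' t f) (S' t f) : ℂ).re =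
        (∫ t in Set.Ioc (0:ℝ) T, (inner ℂ (S n t f - S' t f) (S' t f) : ℂ)).re :=
      integral_re (hIntB n)
    have hsub : (∫ t in Set.Ioc (0:ℝ) T, (inner ℂ (S n (2*t) f - S' (2*t) f) f : ℂ)) =
        ((2:ℝ)⁻¹ : ℂ) * ∫ t in Set.Ioc (0:ℝ) (2*T), (inner ℂ (S n t f - S' t f) f : ℂ) := by
      rw [← intervalIntegral.integral_of_le hT.le,
        ← intervalIntegral.integral_of_le (by linarith : (0:ℝ) ≤ 2*T)]
      have h := intervalIntegral.integral_comp_mul_left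
        (a := (0:ℝ)) (b := T) (c := (2:ℝ))
        (f := fun t => (inner ℂ (S n t f - S' t f) f : ℂ)) two_ne_zero
      simp only [mul_zero] at h
      rw [h, Complex.real_smul]
      norm_num
    rw [step1, step2, hre1, hre2, hsub]
    simp [Complex.mul_re]
  -- L2 convergence
  have hAre : Tendsto (fun n => (∫ t in Set.Ioc (0:ℝ) (2*T),
      (inner ℂ (S n t f - S' t f) f : ℂ)).re) atTop (nhds 0) := by
    have := (Complex.continuous_re.tendsto 0).comp hA
    exact this
  have hBre : Tendsto (fun n => (∫ t in Set.Ioc (0:ℝ) T,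
      (inner ℂ (S n t f - S' t f) (S' t f) : ℂ)).re) atTop (nhds 0) := by
    have := (Complex.continuous_re.tendsto 0).comp hB
    exact this
  have hL2 : Tendsto (fun n => ∫ t in Set.Ioc (0:ℝ) T, ‖S n t f - S' t f‖ ^ 2)
      atTop (nhds 0) := by
    have h := (hAre.const_mul 2⁻¹).sub (hBre.const_mul 2)
    have h' : Tendsto (fun n => 2⁻¹ * (∫ t in Set.Ioc (0:ℝ) (2*T),
        (inner ℂ (S n t f - S' t f) f : ℂ)).re
        - 2 * (∫ t in Set.Ioc (0:ℝ) T, (inner ℂ (S n t f - S' t f) (S' t f) : ℂ)).re)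
        atTop (nhds 0) := by simpa using h
    exact h'.congr fun n => (hiden n).symm
  refine ⟨hL2, ?_⟩
  -- L1 convergence via epsilon argument
  have hInt1 : ∀ n, IntegrableOn (fun t => ‖S n t f - S' t f‖) (Set.Ioc (0:ℝ) T) :=
    fun n => aux_integrable _ T ((hDcont n).norm) (2*‖f‖) fun t ht => by
      rw [Real.norm_eq_abs, abs_of_nonneg (norm_nonneg _)]; exact hDb n t ht.1
  rw [Metric.tendsto_atTop]
  intro ε hε
  obtain ⟨δ, hδdef⟩ : ∃ δ : ℝ, δ = ε / (T + 1) := ⟨_, rfl⟩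
  have hδ : 0 < δ := by rw [hδdef]; positivity
  obtain ⟨N, hN⟩ := (Metric.tendsto_atTop.1 hL2) (δ * δ) (by positivity)
  refine ⟨N, fun n hn => ?_⟩
  have hg0 : 0 ≤ ∫ t in Set.Ioc (0:ℝ) T, ‖S n t f - S' t f‖ ^ 2 :=
    integral_nonneg fun t => by positivity
  have hgδ : ∫ t in Set.Ioc (0:ℝ) T, ‖S n t f - S' t f‖ ^ 2 < δ * δ := by
    have := hN n hn
    rwa [Real.dist_eq, sub_zero, abs_of_nonneg hg0] at this
  have hh0 : 0 ≤ ∫ t in Set.Ioc (0:ℝ) T, ‖S n t f - S' t f‖ :=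
    integral_nonneg fun t => norm_nonneg _
  have hbound : ∫ t in Set.Ioc (0:ℝ) T, ‖S n t f - S' t f‖ ≤
      δ * T + (∫ t in Set.Ioc (0:ℝ) T, ‖S n t f - S' t f‖ ^ 2) / δ := by
    have hmono : ∫ t in Set.Ioc (0:ℝ) T, ‖S n t f - S' t f‖ ≤
        ∫ t in Set.Ioc (0:ℝ) T, (δ + ‖S n t f - S' t f‖ ^ 2 / δ) := by
      refine setIntegral_mono_on (hInt1 n)
        ((integrableOn_const measure_Ioc_lt_top.ne).add ((hInt2 n).div_const δ))
        measurableSet_Ioc fun t _ => ?_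
      set a := ‖S n t f - S' t f‖ with ha
      have ha0 : 0 ≤ a := norm_nonneg _
      rcases le_total a δ with h | h
      · have : 0 ≤ a^2/δ := by positivity
        linarith
      · have : a ≤ a^2/δ := by
          rw [le_div_iff₀ hδ]; nlinarith
        linarith [hδ.le]
    calc ∫ t in Set.Ioc (0:ℝ) T, ‖S n t f - S' t f‖ ≤ _ := hmono
    _ = δ * T + (∫ t in Set.Ioc (0:ℝ) T, ‖S n t f - S' t f‖ ^ 2) / δ := by
        rw [integral_add (show Integrable (fun _ : ℝ => δ) (volume.restrict (Set.Ioc (0:ℝ) T)) from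
            integrableOn_const measure_Ioc_lt_top.ne)
          ((hInt2 n).div_const δ), integral_div, setIntegral_const,
          Real.volume_real_Ioc_of_le hT.le, smul_eq_mul]
        ring
  rw [Real.dist_eq, sub_zero, abs_of_nonneg hh0]
  have hlt : δ * T + (∫ t in Set.Ioc (0:ℝ) T, ‖S n t f - S' t f‖ ^ 2) / δ < δ * T + δ := by
    have : (∫ t in Set.Ioc (0:ℝ) T, ‖S n t f - S' t f‖ ^ 2) / δ < δ := by
      rw [div_lt_iff₀ hδ]; exact hgδ
    linarith
  have hfin : δ * T + δ = ε := by
    rw [hδdef]; field_simp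
  linarith
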